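/- Corollary (inequality (6.6)). Assume all the hypotheses of Theorem 2 (σ-finite measure space, filtration (𝔽_n), martingale (S_n) with S_n ∈ L^p(μ) for all p ∈ (a,b) with 1 < a < b ≤ ∞, ψ ∈ Ψ(a,b), σ(n) = n^γ L(n) nondecreasing with γ > 0 and C₂ := sup_n L(2n)/L(n) < ∞, and K := sup_n sup_{p∈(a,b)} ‖S_n‖_{L^p(μ)}/(ψ(p)σ(n)) < ∞). Let Δ ∈ (0,1] and let v : {1,2,…} → [1,∞) be nondecreasing with v(n) ≥ (log n)·(log log n)^{1+Δ} for all n ≥ 16. Then there is an absolute constant C such that, with ψ₁(p) = p·ψ(p)/(p − 1), ‖ sup_{n≥1} |S_n|/(v(n)·σ(n)) ‖_{G(ψ₁)} ≤ C · 2^γ · C₂ · K / Δ. -/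

import Mathlib

open MeasureTheory ENNReal Set

noncomputable section

/-- The set of exponents p with a < p and p < b (b may be infinite). -/
def expSet (a : ℝ) (b : ℝ≥0∞) : Set ℝ := {p : ℝ | a < p ∧ ENNReal.ofReal p < b}

/-- The class Ψ(a,b). -/
structure IsPsi (a : ℝ) (b : ℝ≥0∞) (ψ : ℝ → ℝ) : Prop where
  one_le : ∀ p ∈ expSet a b, 1 ≤ ψ p
  bddOnCompacts : ∀ c d : ℝ, c ∈ expSet a b → d ∈ expSet a b → BddAbove (ψ '' Set.Icc c d)
  logConvex : ConvexOn ℝ (expSet a b) fun p => Real.log (ψ p)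

/-- L^p norm (real exponent). -/
def lpNorm {X : Type*} [MeasurableSpace X] (μ : Measure X) (f : X → ℝ) (p : ℝ) : ℝ≥0∞ :=
  (∫⁻ x, ENNReal.ofReal (|f x| ^ p) ∂μ) ^ (1 / p)

/-- Bilateral Grand Lebesgue norm. -/
def glNorm {X : Type*} [MeasurableSpace X] (μ : Measure X) (a : ℝ) (b : ℝ≥0∞) (ψ : ℝ → ℝ)
    (f : X → ℝ) : ℝ≥0∞ :=
  ⨆ p ∈ expSet a b, lpNorm μ f p / ENNReal.ofReal (ψ p)

/-- L^p norm for extended-real-valued functions. -/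
def lpNormE {X : Type*} [MeasurableSpace X] (μ : Measure X) (g : X → EReal) (p : ℝ) : ℝ≥0∞ :=
  (∫⁻ x, (g x).abs ^ p ∂μ) ^ (1 / p)

/-- Bilateral Grand Lebesgue norm for extended-real-valued functions. -/
def glNormE {X : Type*} [MeasurableSpace X] (μ : Measure X) (a : ℝ) (b : ℝ≥0∞) (ψ : ℝ → ℝ)
    (g : X → EReal) : ℝ≥0∞ :=
  ⨆ p ∈ expSet a b, lpNormE μ g p / ENNReal.ofReal (ψ p)

/-- L^p norm for `ℝ≥0∞`-valued functions. -/
def lpNormNN {X : Type*} [MeasurableSpace X] (μ : Measure X) (g : X → ℝ≥0∞) (p : ℝ) : ℝ≥0∞ :=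
  (∫⁻ x, g x ^ p ∂μ) ^ (1 / p)

end

section Aux
open Finset
set_option linter.unusedSectionVars false
set_option linter.unusedVariables false


variable {X : Type*} [m0 : MeasurableSpace X] {μ : Measure X} {ℱ : Filtration ℕ m0}

/-- running maximum -/
def maxTo (f : ℕ → X → ℝ) (N : ℕ) (x : X) : ℝ :=
  (Finset.range (N+1)).sup' Finset.nonempty_range_add_one (fun n => f n x)

lemma le_maxTo (f : ℕ → X → ℝ) {n N : ℕ} (h : n ≤ N) (x : X) : f n x ≤ maxTo f N x :=
  Finset.le_sup' (fun n => f n x) (Finset.mem_range.2 (Nat.lt_succ_of_le h))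

lemma maxTo_nonneg {f : ℕ → X → ℝ} (hnn : ∀ n x, 0 ≤ f n x) (N : ℕ) (x : X) :
    0 ≤ maxTo f N x := le_trans (hnn 0 x) (le_maxTo f (Nat.zero_le N) x)

lemma measurable_maxTo {f : ℕ → X → ℝ} (hm : ∀ n, Measurable (f n)) (N : ℕ) :
    Measurable (maxTo f N) :=
  Finset.measurable_range_sup'' fun n _ => hm n

lemma maxTo_le_sum {f : ℕ → X → ℝ} (hnn : ∀ n x, 0 ≤ f n x) (N : ℕ) (x : X) :
    maxTo f N x ≤ ∑ n ∈ Finset.range (N+1), f n x :=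
  Finset.sup'_le _ _ fun n hn => Finset.single_le_sum (fun m _ => hnn m x) hn

theorem doob_weak [SigmaFiniteFiltration μ ℱ] {f : ℕ → X → ℝ}
    (hf : Submartingale f ℱ μ) (hnn : ∀ n x, 0 ≤ f n x) (N : ℕ) {t : ℝ} (ht : 0 < t) :
    ENNReal.ofReal t * μ {x | t ≤ maxTo f N x} ≤
      ∫⁻ x in {x | t ≤ maxTo f N x}, ENNReal.ofReal (f N x) ∂μ := by
  have hmf : ∀ n, Measurable (f n) := fun n =>
    ((hf.stronglyMeasurable n).measurable).le (ℱ.le n)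
  set B : ℕ → Set X := fun n => if n ≤ N then {x | t ≤ f n x} else ∅ with hB
  -- B n is ℱ n measurable
  have hBmeas : ∀ n, MeasurableSet[ℱ n] (B n) := by
    intro n
    by_cases h : n ≤ N
    · simpa [hB, h] using measurableSet_le measurable_const (hf.stronglyMeasurable n).measurable
    · simp [hB, h]
  have hDmeas : ∀ n, MeasurableSet[ℱ n] (disjointed B n) := by
    intro n
    induction n with
    | zero => simpa [disjointed_zero] using hBmeas 0
    | succ n ih =>
      rw [disjointed_add_one]
      refine (hBmeas (n+1)).diff ?_
      -- partialSups B n is ℱ n ≤ ℱ (n+1) measurable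
      have : ∀ m, MeasurableSet[ℱ m] ((partialSups B) m) := by
        intro m
        induction m with
        | zero => simpa [partialSups_zero] using hBmeas 0
        | succ m ihm =>
          rw [← Order.succ_eq_add_one, partialSups_succ]
          exact MeasurableSet.union (ℱ.mono (Nat.le_succ m) _ ihm) (hBmeas (m+1))
      exact ℱ.mono (Nat.le_succ n) _ (this n)
  have hDmeas0 : ∀ n, MeasurableSet (disjointed B n) := fun n => ℱ.le n _ (hDmeas n)
  have hUnion : {x | t ≤ maxTo f N x} = ⋃ n, disjointed B n := by
    rw [iUnion_disjointed]
    ext x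
    simp only [Set.mem_setOf_eq, Set.mem_iUnion]
    constructor
    · intro hx
      obtain ⟨n, hn, hfn⟩ := Finset.exists_mem_eq_sup' (Finset.nonempty_range_add_one)
        (fun n => f n x)
      refine ⟨n, ?_⟩
      have : n ≤ N := Nat.lt_succ_iff.1 (Finset.mem_range.1 hn)
      simp only [hB, if_pos this, Set.mem_setOf_eq]
      exact le_trans hx (le_of_eq hfn)
    · rintro ⟨n, hn⟩
      by_cases h : n ≤ N
      · simp only [hB, if_pos h, Set.mem_setOf_eq] at hn
        exact le_trans hn (le_maxTo f h x)
      · simp [hB, if_neg h] at hn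
  rw [hUnion, measure_iUnion (disjoint_disjointed B) hDmeas0,
    lintegral_iUnion hDmeas0 (disjoint_disjointed B), ← ENNReal.tsum_mul_left]
  refine ENNReal.tsum_le_tsum fun n => ?_
  by_cases h : n ≤ N
  · -- on D n, t ≤ f n x
    have hsub : disjointed B n ⊆ {x | t ≤ f n x} := by
      intro x hx
      have := disjointed_subset B n hx
      simpa [hB, if_pos h] using this
    calc ENNReal.ofReal t * μ (disjointed B n)
        ≤ ∫⁻ x in disjointed B n, ENNReal.ofReal (f n x) ∂μ := by
          rw [← setLIntegral_const]
          exact setLIntegral_mono (ENNReal.measurable_ofReal.comp (hmf n))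
            (fun x hx => ENNReal.ofReal_le_ofReal (hsub hx))
      _ ≤ ∫⁻ x in disjointed B n, ENNReal.ofReal (f N x) ∂μ := by
          rw [← ofReal_integral_eq_lintegral_ofReal ((hf.integrable n).restrict)
              (Filter.Eventually.of_forall (fun x => hnn n x)),
            ← ofReal_integral_eq_lintegral_ofReal ((hf.integrable N).restrict)
              (Filter.Eventually.of_forall (fun x => hnn N x))]
          exact ENNReal.ofReal_le_ofReal (hf.setIntegral_le h (hDmeas n))
  · have : disjointed B n = ∅ := by
      have := disjointed_subset B n
      rw [hB] at this
      simp only [if_neg h] at this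
      exact Set.eq_empty_of_subset_empty this
    simp [this]


section mink
variable {X : Type*} [m0 : MeasurableSpace X] {μ : Measure X}

lemma lp_sum_le {ι : Type*} (s : Finset ι) {F : ι → X → ℝ≥0∞}
    (hm : ∀ i, AEMeasurable (F i) μ) {p : ℝ} (hp : 1 ≤ p) :
    (∫⁻ x, (∑ i ∈ s, F i x) ^ p ∂μ) ^ (1/p) ≤ ∑ i ∈ s, (∫⁻ x, F i x ^ p ∂μ) ^ (1/p) := by
  classical
  induction s using Finset.induction_on with
  | empty =>
    have hp0 : (0:ℝ) < p := lt_of_lt_of_le zero_lt_one hp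
    simp [ENNReal.zero_rpow_of_pos hp0,
      ENNReal.zero_rpow_of_pos (by positivity : (0:ℝ) < 1/p), hp0]
  | insert a s' hni ih =>
    simp only [Finset.sum_insert hni]
    calc (∫⁻ x, (F a x + ∑ i ∈ s', F i x) ^ p ∂μ) ^ (1/p)
        ≤ (∫⁻ x, F a x ^ p ∂μ) ^ (1/p) + (∫⁻ x, (∑ i ∈ s', F i x) ^ p ∂μ) ^ (1/p) :=
          ENNReal.lintegral_Lp_add_le (hm a) (Finset.aemeasurable_fun_sum s' (fun i _ => hm i)) hp
      _ ≤ _ := add_le_add_right ih _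

lemma rpow_iSup {g : ℕ → ℝ≥0∞} {p : ℝ} (hp : 0 < p) : (⨆ n, g n) ^ p = ⨆ n, g n ^ p := by
  refine Monotone.map_iSup_of_continuousAt (f := fun x : ℝ≥0∞ => x ^ p)
    (ENNReal.continuous_rpow_const.continuousAt) (fun u v huv => ENNReal.rpow_le_rpow huv hp.le)
    (by simpa using ENNReal.zero_rpow_of_pos hp)

lemma lp_tsum_le {F : ℕ → X → ℝ≥0∞} (hm : ∀ i, Measurable (F i)) {p : ℝ} (hp : 1 ≤ p) :
    (∫⁻ x, (∑' i, F i x) ^ p ∂μ) ^ (1/p) ≤ ∑' i, (∫⁻ x, F i x ^ p ∂μ) ^ (1/p) := by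
  have hp0 : 0 < p := lt_of_lt_of_le zero_lt_one hp
  have h1p : 0 < 1/p := by positivity
  have key : (∫⁻ x, (∑' i, F i x) ^ p ∂μ)
      = ⨆ n, ∫⁻ x, (∑ i ∈ Finset.range n, F i x) ^ p ∂μ := by
    have : ∀ x, (∑' i, F i x) ^ p = ⨆ n, (∑ i ∈ Finset.range n, F i x) ^ p := by
      intro x
      rw [ENNReal.tsum_eq_iSup_nat, rpow_iSup hp0]
    simp_rw [this]
    refine lintegral_iSup (fun n => ?_) (fun n m hnm => ?_)
    · exact ((Finset.measurable_sum _ (fun i _ => hm i)).pow_const _)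
    · intro x
      exact ENNReal.rpow_le_rpow (Finset.sum_le_sum_of_subset
        (Finset.range_subset_range.2 hnm)) hp0.le
  rw [key, rpow_iSup h1p]
  refine iSup_le fun n => ?_
  calc (∫⁻ x, (∑ i ∈ Finset.range n, F i x) ^ p ∂μ) ^ (1/p)
      ≤ ∑ i ∈ Finset.range n, (∫⁻ x, F i x ^ p ∂μ) ^ (1/p) :=
        lp_sum_le _ (fun i => (hm i).aemeasurable) hp
    _ ≤ ∑' i, (∫⁻ x, F i x ^ p ∂μ) ^ (1/p) := ENNReal.sum_le_tsum _

end mink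

theorem doob_lp [SigmaFiniteFiltration μ ℱ] [SigmaFinite μ] {f : ℕ → X → ℝ}
    (hf : Submartingale f ℱ μ) (hnn : ∀ n x, 0 ≤ f n x) {p : ℝ} (hp : 1 < p)
    (hfin : ∀ n, ∫⁻ x, ENNReal.ofReal (f n x) ^ p ∂μ ≠ ⊤) (N : ℕ) :
    (∫⁻ x, ENNReal.ofReal (maxTo f N x) ^ p ∂μ) ^ (1/p) ≤
      ENNReal.ofReal (p/(p-1)) * (∫⁻ x, ENNReal.ofReal (f N x) ^ p ∂μ) ^ (1/p) := by
  have hp0 : (0:ℝ) < p := lt_trans zero_lt_one hp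
  have hp1 : (0:ℝ) < p - 1 := by linarith
  have hmf : ∀ n, Measurable (f n) := fun n =>
    ((hf.stronglyMeasurable n).measurable).le (ℱ.le n)
  set g : X → ℝ := maxTo f N with hg
  have hgm : Measurable g := measurable_maxTo hmf N
  have hgnn : ∀ x, 0 ≤ g x := maxTo_nonneg hnn N
  set F : X → ℝ≥0∞ := fun x => ENNReal.ofReal (f N x) with hF
  have hFm : Measurable F := ENNReal.measurable_ofReal.comp (hmf N)
  set G : X → ℝ≥0∞ := fun x => ENNReal.ofReal (g x) with hG
  have hGm : Measurable G := ENNReal.measurable_ofReal.comp hgm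
  set I : ℝ≥0∞ := ∫⁻ x, G x ^ p ∂μ with hI
  -- finiteness of I
  have hIfin : I ≠ ⊤ := by
    have h1 : I ^ (1/p) ≤ ∑ n ∈ Finset.range (N+1), (∫⁻ x, ENNReal.ofReal (f n x) ^ p ∂μ) ^ (1/p) := by
      refine le_trans ?_ (lp_sum_le (Finset.range (N+1))
        (fun n => (ENNReal.measurable_ofReal.comp (hmf n)).aemeasurable) hp.le)
      refine ENNReal.rpow_le_rpow (lintegral_mono fun x => ?_) (by positivity)
      refine ENNReal.rpow_le_rpow ?_ hp0.le
      calc G x ≤ ENNReal.ofReal (∑ n ∈ Finset.range (N+1), f n x) :=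
            ENNReal.ofReal_le_ofReal (maxTo_le_sum hnn N x)
        _ = ∑ n ∈ Finset.range (N+1), ENNReal.ofReal (f n x) :=
            ENNReal.ofReal_sum_of_nonneg (fun n _ => hnn n x)
    intro htop
    rw [htop, ENNReal.top_rpow_of_pos (by positivity)] at h1
    exact (ENNReal.sum_lt_top.2 fun n _ => ENNReal.rpow_lt_top_of_nonneg (by positivity)
      (hfin n)).ne (top_le_iff.1 h1)
  by_cases hI0 : I = 0
  · rw [hI0, ENNReal.zero_rpow_of_pos (by positivity)]; exact bot_le
  -- layer cake
  have step1 : I = ENNReal.ofReal p *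
      ∫⁻ t in Ioi (0:ℝ), μ {x | t ≤ g x} * ENNReal.ofReal (t ^ (p-1)) := by
    have := lintegral_rpow_eq_lintegral_meas_le_mul μ
      (Filter.Eventually.of_forall hgnn) hgm.aemeasurable hp0
    rw [hI, ← this]
    refine lintegral_congr fun x => ?_
    rw [hG, ENNReal.ofReal_rpow_of_nonneg (hgnn x) hp0.le]
  -- pointwise bound on the t-integrand
  have step2 : ∀ t : ℝ, t ∈ Ioi (0:ℝ) →
      μ {x | t ≤ g x} * ENNReal.ofReal (t ^ (p-1)) ≤
        ENNReal.ofReal (t ^ (p-2)) * ∫⁻ x in {x | t ≤ g x}, F x ∂μ := by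
    intro t ht
    have ht0 : 0 < t := ht
    have hsplit : t ^ (p-1) = t ^ (p-2) * t := by
      rw [show p-1 = (p-2)+1 by ring, Real.rpow_add ht0, Real.rpow_one]
    rw [hsplit, ENNReal.ofReal_mul (by positivity), mul_comm (μ _),
      mul_assoc]
    refine mul_le_mul_right ?_ _
    exact doob_weak hf hnn N ht0
  -- the uncurried kernel for Tonelli
  set Phi : ℝ × X → ℝ≥0∞ :=
    {q : ℝ × X | q.1 ≤ g q.2}.indicator
      (fun q => ENNReal.ofReal (q.1 ^ (p-2)) * F q.2) with hPhi
  have hsetm : MeasurableSet {q : ℝ × X | q.1 ≤ g q.2} :=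
    measurableSet_le measurable_fst (hgm.comp measurable_snd)
  have hPhim : Measurable Phi := by
    refine Measurable.indicator ?_ hsetm
    exact ((measurable_fst.pow_const (p-2)).ennreal_ofReal).mul (hFm.comp measurable_snd)
  -- inner x-integral of Phi
  have hinner_x : ∀ t : ℝ, (∫⁻ x, Phi (t, x) ∂μ) =
      ENNReal.ofReal (t ^ (p-2)) * ∫⁻ x in {x | t ≤ g x}, F x ∂μ := by
    intro t
    have : (fun x => Phi (t, x)) =
        {x : X | t ≤ g x}.indicator (fun x => ENNReal.ofReal (t ^ (p-2)) * F x) := by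
      funext x
      by_cases hx : t ≤ g x <;>
        simp [hPhi, Set.indicator_apply, hx]
    rw [this, lintegral_indicator (measurableSet_le measurable_const hgm),
      lintegral_const_mul _ hFm]
  -- inner t-integral of Phi
  have hinner_t : ∀ x : X, (∫⁻ t in Ioi (0:ℝ), Phi (t, x)) =
      F x * ENNReal.ofReal (g x ^ (p-1) / (p-1)) := by
    intro x
    have hfun : (fun t : ℝ => Phi (t, x)) =
        (Iic (g x)).indicator (fun t => ENNReal.ofReal (t ^ (p-2)) * F x) := by
      funext t
      by_cases hx : t ≤ g x <;> simp [hPhi, Set.indicator_apply, hx]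
    rw [hfun, lintegral_indicator measurableSet_Iic, Measure.restrict_restrict measurableSet_Iic]
    have hIic : Iic (g x) ∩ Ioi (0:ℝ) = Ioc 0 (g x) := by
      ext u; simp only [Set.mem_inter_iff, Set.mem_Iic, Set.mem_Ioi, Set.mem_Ioc]; tauto
    rw [hIic, lintegral_mul_const' _ _ (by exact ENNReal.ofReal_ne_top), mul_comm]
    congr 1
    have hint : IntegrableOn (fun u : ℝ => u ^ (p-2)) (Ioc 0 (g x)) volume :=
      (intervalIntegral.intervalIntegrable_rpow' (by linarith : (-1:ℝ) < p-2)).1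
    rw [← ofReal_integral_eq_lintegral_ofReal hint ?_]
    · congr 1
      rw [← intervalIntegral.integral_of_le (hgnn x),
        integral_rpow (Or.inl (by linarith : (-1:ℝ) < p-2))]
      rw [show p-2+1 = p-1 by ring, Real.zero_rpow (by linarith : p-1 ≠ 0)]
      ring
    · filter_upwards [self_mem_ae_restrict (measurableSet_Ioc)] with u hu
      exact Real.rpow_nonneg hu.1.le _
  -- combine with Tonelli
  have hGp1 : ∀ x : X, G x ^ (p-1) = ENNReal.ofReal (g x ^ (p-1)) := fun x =>
    ENNReal.ofReal_rpow_of_nonneg (hgnn x) hp1.le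
  have step3 : I ≤ ENNReal.ofReal (p/(p-1)) * ∫⁻ x, F x * G x ^ (p-1) ∂μ := by
    have swap : (∫⁻ t in Ioi (0:ℝ), ∫⁻ x, Phi (t, x) ∂μ) =
        ∫⁻ x, (∫⁻ t in Ioi (0:ℝ), Phi (t, x)) ∂μ :=
      lintegral_lintegral_swap (hPhim.aemeasurable)
    calc I = ENNReal.ofReal p *
        ∫⁻ t in Ioi (0:ℝ), μ {x | t ≤ g x} * ENNReal.ofReal (t ^ (p-1)) := step1
      _ ≤ ENNReal.ofReal p * ∫⁻ t in Ioi (0:ℝ), ∫⁻ x, Phi (t, x) ∂μ := by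
          refine mul_le_mul_right ?_ _
          refine lintegral_mono_ae ?_
          filter_upwards [self_mem_ae_restrict measurableSet_Ioi] with t ht
          rw [hinner_x t]
          exact step2 t ht
      _ = ENNReal.ofReal p * ∫⁻ x, F x * ENNReal.ofReal (g x ^ (p-1) / (p-1)) ∂μ := by
          rw [swap]; congr 1; exact lintegral_congr hinner_t
      _ = ENNReal.ofReal (p/(p-1)) * ∫⁻ x, F x * G x ^ (p-1) ∂μ := by
          have hptw : ∀ x : X, F x * ENNReal.ofReal (g x ^ (p-1) / (p-1)) =
              ENNReal.ofReal ((p-1)⁻¹) * (F x * G x ^ (p-1)) := by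
            intro x
            rw [hGp1 x, div_eq_mul_inv,
              ENNReal.ofReal_mul (Real.rpow_nonneg (hgnn x) _)]
            ring
          simp_rw [hptw]
          rw [lintegral_const_mul (f := fun x => F x * G x ^ (p-1)) _ (hFm.mul (hGm.pow_const _)), ← mul_assoc,
            ← ENNReal.ofReal_mul hp0.le, div_eq_mul_inv]
  -- Hoelder
  set A : ℝ≥0∞ := (∫⁻ x, F x ^ p ∂μ) ^ (1/p) with hA
  have hq : p.HolderConjugate (p/(p-1)) :=
    (Real.holderConjugate_iff_eq_conjExponent hp).2 rfl
  have holder : (∫⁻ x, F x * G x ^ (p-1) ∂μ) ≤ A * I ^ (1/(p/(p-1))) := by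
    have h := ENNReal.lintegral_mul_le_Lp_mul_Lq μ hq hFm.aemeasurable
      ((hGm.pow_const (p-1)).aemeasurable)
    refine le_trans (le_of_eq (by rfl)) (le_trans h (le_of_eq ?_))
    congr 1
    rw [hI]
    congr 1
    refine lintegral_congr fun x => ?_
    rw [← ENNReal.rpow_mul]
    congr 1
    field_simp
  -- conclude
  have hq' : (1:ℝ)/(p/(p-1)) = 1 - 1/p := by
    field_simp
  have hIsplit : I = I ^ (1/p) * I ^ (1/(p/(p-1))) := by
    rw [← ENNReal.rpow_add _ _ hI0 hIfin]
    rw [hq']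
    norm_num
  have main : I ^ (1/p) * I ^ (1/(p/(p-1))) ≤
      (ENNReal.ofReal (p/(p-1)) * A) * I ^ (1/(p/(p-1))) := by
    rw [← hIsplit]
    calc I ≤ ENNReal.ofReal (p/(p-1)) * ∫⁻ x, F x * G x ^ (p-1) ∂μ := step3
      _ ≤ ENNReal.ofReal (p/(p-1)) * (A * I ^ (1/(p/(p-1)))) := mul_le_mul_right holder _
      _ = (ENNReal.ofReal (p/(p-1)) * A) * I ^ (1/(p/(p-1))) := by rw [mul_assoc]
  have hcancel := (ENNReal.mul_le_mul_iff_left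
    (a := I ^ (1/p)) (b := ENNReal.ofReal (p/(p-1)) * A)
    (show I ^ (1/(p/(p-1))) ≠ 0 by
      simp [ENNReal.rpow_eq_zero_iff, hI0, hIfin])
    (show I ^ (1/(p/(p-1))) ≠ ⊤ by
      simp [ENNReal.rpow_eq_top_iff, hI0, hIfin])).1 main
  exact hcancel


lemma mvt_step {Δ : ℝ} (hΔ0 : 0 < Δ) {r : ℝ} (hr : 4 ≤ r) :
    Δ / (r * Real.log r ^ (1+Δ)) ≤
      Real.log (r-1) ^ (-Δ) - Real.log r ^ (-Δ) := by
  have h3 : (3:ℝ) ≤ r - 1 := by linarith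
  have hlogpos : ∀ t : ℝ, 3 ≤ t → 1 < Real.log t := by
    intro t ht
    have h1 : Real.exp 1 < 3 := lt_trans Real.exp_one_lt_d9 (by norm_num)
    calc 1 = Real.log (Real.exp 1) := (Real.log_exp 1).symm
      _ < Real.log t := Real.log_lt_log (Real.exp_pos 1) (lt_of_lt_of_le h1 (by linarith))
  have hcont : ContinuousOn (fun t => Real.log t ^ (-Δ)) (Set.Icc (r-1) r) := by
    apply ContinuousOn.rpow_const
    · exact Real.continuousOn_log.mono (fun t ht => by
        simp only [Set.mem_compl_iff, Set.mem_singleton_iff]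
        have h3t : (3:ℝ) ≤ t := le_trans h3 ht.1
        intro h0; rw [h0] at h3t; norm_num at h3t)
    · intro t ht
      left
      have := hlogpos t (le_trans h3 ht.1)
      linarith
  have hderiv : ∀ t ∈ Set.Ioo (r-1) r,
      HasDerivAt (fun t => Real.log t ^ (-Δ)) (t⁻¹ * (-Δ) * Real.log t ^ (-Δ - 1)) t := by
    intro t ht
    have h3t : 3 ≤ t := le_trans h3 ht.1.le
    have hlt : 1 < Real.log t := hlogpos t h3t
    have := (Real.hasDerivAt_log (by linarith : t ≠ 0)).rpow_const
      (p := -Δ) (Or.inl (by linarith))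
    simpa using this
  obtain ⟨ξ, hξ, hslope⟩ := exists_hasDerivAt_eq_slope (fun t => Real.log t ^ (-Δ))
    (fun t => t⁻¹ * (-Δ) * Real.log t ^ (-Δ - 1)) (by linarith : r - 1 < r) hcont hderiv
  have hξ1 : 3 ≤ ξ := le_trans h3 hξ.1.le
  have hξpos : (0:ℝ) < ξ := by linarith
  have hlogξ : 1 < Real.log ξ := hlogpos ξ hξ1
  have hlogr : 1 < Real.log r := hlogpos r (by linarith)
  rw [show r - (r-1) = 1 by ring, div_one] at hslope
  have key : Real.log (r-1) ^ (-Δ) - Real.log r ^ (-Δ)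
      = Δ * (ξ⁻¹ * Real.log ξ ^ (-Δ - 1)) := by nlinarith [hslope]
  rw [key]
  have h1 : r⁻¹ ≤ ξ⁻¹ := inv_anti₀ hξpos hξ.2.le
  have h2 : Real.log r ^ (-Δ - 1) ≤ Real.log ξ ^ (-Δ - 1) := by
    rw [show -Δ - 1 = -(Δ+1) by ring, Real.rpow_neg (by linarith : (0:ℝ) ≤ Real.log ξ),
      Real.rpow_neg (by linarith : (0:ℝ) ≤ Real.log r)]
    apply inv_anti₀ (Real.rpow_pos_of_pos (by linarith) _)
    exact Real.rpow_le_rpow (by linarith) (Real.log_le_log hξpos hξ.2.le) (by linarith)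
  calc Δ / (r * Real.log r ^ (1+Δ))
      = Δ * (r⁻¹ * Real.log r ^ (-Δ-1)) := by
        rw [show -Δ - 1 = -(1+Δ) by ring, Real.rpow_neg (by linarith : (0:ℝ) ≤ Real.log r)]
        field_simp
    _ ≤ Δ * (ξ⁻¹ * Real.log ξ ^ (-Δ - 1)) := by
        refine mul_le_mul_of_nonneg_left ?_ hΔ0.le
        exact mul_le_mul h1 h2 (Real.rpow_nonneg (by linarith) _) (by positivity)

lemma log_gt_one {t : ℝ} (ht : 3 ≤ t) : 1 < Real.log t := by
  have h1 : Real.exp 1 < 3 := lt_trans Real.exp_one_lt_d9 (by norm_num)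
  calc 1 = Real.log (Real.exp 1) := (Real.log_exp 1).symm
    _ < Real.log t := Real.log_lt_log (Real.exp_pos 1) (lt_of_lt_of_le h1 ht)

lemma term_bound {Δ : ℝ} (hΔ0 : 0 < Δ) (hΔ1 : Δ ≤ 1) {v : ℕ → ℝ}
    (hvlog : ∀ n : ℕ, 16 ≤ n → Real.log n * Real.log (Real.log n) ^ (1+Δ) ≤ v n)
    {k : ℕ} (hk : 4 ≤ k) :
    (v (2^k))⁻¹ ≤ 8 / ((k:ℝ) * Real.log k ^ (1+Δ)) := by
  have hk4 : (4:ℝ) ≤ (k:ℝ) := by exact_mod_cast hk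
  have h2k : 16 ≤ 2^k := le_trans (by norm_num) (Nat.pow_le_pow_right (by norm_num) hk)
  have hlog2 : (1:ℝ)/2 < Real.log 2 := lt_trans (by norm_num) Real.log_two_gt_d9
  have hlog2lt : Real.log 2 < 1 := by
    have := Real.log_two_lt_d9
    norm_num at this ⊢
    linarith
  have hlogk : 1 < Real.log k := log_gt_one (by linarith)
  have hcast : ((2^k : ℕ) : ℝ) = (2:ℝ)^(k:ℕ) := by push_cast; ring
  have hlogA : Real.log ((2^k : ℕ) : ℝ) = (k:ℝ) * Real.log 2 := by
    rw [hcast, Real.log_pow]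
  have hA2 : (k:ℝ)/2 ≤ (k:ℝ) * Real.log 2 := by nlinarith
  have hloglog : Real.log k / 2 ≤ Real.log ((k:ℝ) * Real.log 2) := by
    rw [Real.log_mul (by positivity) (by positivity)]
    have e1 : Real.log (1/2 : ℝ) ≤ Real.log (Real.log 2) :=
      Real.log_le_log (by norm_num) hlog2.le
    have e2 : Real.log (1/2 : ℝ) = - Real.log 2 := by
      rw [one_div, Real.log_inv]
    have e3 : Real.log 4 ≤ Real.log k := Real.log_le_log (by norm_num) (by linarith)
    have e4 : Real.log 4 = 2 * Real.log 2 := by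
      rw [show (4:ℝ) = 2^(2:ℕ) by norm_num, Real.log_pow]; push_cast; ring
    linarith
  have hvlower : (k:ℝ) * Real.log k ^ (1+Δ) / 8 ≤ v (2^k) := by
    have h1 := hvlog (2^k) h2k
    rw [hlogA] at h1
    have h2 : (Real.log k / 2) ^ (1+Δ) ≤ Real.log ((k:ℝ) * Real.log 2) ^ (1+Δ) :=
      Real.rpow_le_rpow (by positivity) hloglog (by linarith)
    have h3 : (Real.log k / 2) ^ (1+Δ) = Real.log k ^ (1+Δ) / 2 ^ (1+Δ) :=
      Real.div_rpow (by positivity) (by norm_num : (0:ℝ) ≤ 2) _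
    have h4 : (2:ℝ) ^ (1+Δ) ≤ 4 := by
      calc (2:ℝ) ^ (1+Δ) ≤ 2 ^ (2:ℝ) :=
            Real.rpow_le_rpow_of_exponent_le (by norm_num) (by linarith)
        _ = 4 := by
            rw [show (2:ℝ) = ((2:ℕ):ℝ) by norm_num, Real.rpow_natCast]; norm_num
    have h5 : Real.log k ^ (1+Δ) / 4 ≤ (Real.log k / 2) ^ (1+Δ) := by
      rw [h3]
      apply div_le_div_of_nonneg_left (by positivity) (by positivity) h4
    have h6 : (k:ℝ)/2 * (Real.log k ^ (1+Δ) / 4) ≤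
        ((k:ℝ) * Real.log 2) * Real.log ((k:ℝ) * Real.log 2) ^ (1+Δ) := by
      apply mul_le_mul hA2 (le_trans h5 h2) (by positivity) (by positivity)
    calc (k:ℝ) * Real.log k ^ (1+Δ) / 8 = (k:ℝ)/2 * (Real.log k ^ (1+Δ) / 4) := by ring
      _ ≤ ((k:ℝ) * Real.log 2) * Real.log ((k:ℝ) * Real.log 2) ^ (1+Δ) := h6
      _ ≤ v (2^k) := h1
  have hpos : (0:ℝ) < (k:ℝ) * Real.log k ^ (1+Δ) / 8 := by positivity
  calc (v (2^k))⁻¹ ≤ ((k:ℝ) * Real.log k ^ (1+Δ) / 8)⁻¹ := inv_anti₀ hpos hvlower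
    _ = 8 / ((k:ℝ) * Real.log k ^ (1+Δ)) := by rw [inv_div]

lemma series_bound {Δ : ℝ} (hΔ0 : 0 < Δ) (hΔ1 : Δ ≤ 1) {v : ℕ → ℝ}
    (hv1 : ∀ n, 1 ≤ n → 1 ≤ v n)
    (hvlog : ∀ n : ℕ, 16 ≤ n → Real.log n * Real.log (Real.log n) ^ (1+Δ) ≤ v n) :
    ∑' k : ℕ, ENNReal.ofReal (v (2^k))⁻¹ ≤ ENNReal.ofReal (12/Δ) := by
  have hvpos : ∀ k : ℕ, 0 < v (2^k) := fun k =>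
    lt_of_lt_of_le zero_lt_one (hv1 _ (Nat.one_le_two_pow))
  set u : ℕ → ℝ := fun j => Real.log (3 + (j:ℝ)) ^ (-Δ) with hu
  have hun : ∀ j, 0 ≤ u j := fun j => Real.rpow_nonneg
    (Real.log_nonneg (by push_cast; linarith)) _
  have hu0 : u 0 ≤ 1 := by
    rw [hu]
    simp only [Nat.cast_zero, add_zero]
    exact Real.rpow_le_one_of_one_le_of_nonpos (log_gt_one (by norm_num)).le (by linarith)
  have hsum : ∀ n : ℕ, ∑ k ∈ Finset.range n, (v (2^k))⁻¹ ≤ 12/Δ := by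
    intro n
    have h1 : ∑ k ∈ Finset.range n, (v (2^k))⁻¹ ≤
        ∑ k ∈ Finset.range (4+n), (v (2^k))⁻¹ := by
      apply Finset.sum_le_sum_of_subset_of_nonneg
      · exact Finset.range_subset_range.2 (by omega)
      · intro k _ _; exact inv_nonneg.2 (hvpos k).le
    have h2 : ∑ k ∈ Finset.range (4+n), (v (2^k))⁻¹ =
        (∑ k ∈ Finset.range 4, (v (2^k))⁻¹) + ∑ j ∈ Finset.range n, (v (2^(4+j)))⁻¹ := by
      rw [Finset.sum_range_add]
    have h3 : ∑ k ∈ Finset.range 4, (v (2^k))⁻¹ ≤ 4 := by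
      have : ∀ k : ℕ, (v (2^k))⁻¹ ≤ 1 := fun k =>
        inv_le_one_of_one_le₀ (hv1 _ Nat.one_le_two_pow)
      calc ∑ k ∈ Finset.range 4, (v (2^k))⁻¹ ≤ ∑ k ∈ Finset.range 4, (1:ℝ) :=
            Finset.sum_le_sum fun k _ => this k
        _ = 4 := by simp
    have h4 : ∀ j : ℕ, (v (2^(4+j)))⁻¹ ≤ (8/Δ) * (u j - u (j+1)) := by
      intro j
      have hterm := term_bound hΔ0 hΔ1 hvlog (k := 4+j) (by omega)
      have hmvt := mvt_step hΔ0 (r := ((4+j : ℕ):ℝ)) (by push_cast; linarith)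
      have hc1 : ((4+j : ℕ):ℝ) - 1 = 3 + (j:ℝ) := by push_cast; ring
      have hc2 : ((4+j : ℕ):ℝ) = 3 + ((j+1 : ℕ):ℝ) := by push_cast; ring
      have hmvt' : Δ / (((4+j:ℕ):ℝ) * Real.log ((4+j:ℕ):ℝ) ^ (1+Δ)) ≤ u j - u (j+1) := by
        rw [hu]
        simp only []
        calc Δ / (((4+j:ℕ):ℝ) * Real.log ((4+j:ℕ):ℝ) ^ (1+Δ))
            ≤ Real.log (((4+j:ℕ):ℝ) - 1) ^ (-Δ) - Real.log ((4+j:ℕ):ℝ) ^ (-Δ) := hmvt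
          _ = Real.log (3 + (j:ℝ)) ^ (-Δ) - Real.log (3 + ((j+1:ℕ):ℝ)) ^ (-Δ) := by
              rw [hc1, ← hc2]
      calc (v (2^(4+j)))⁻¹ ≤ 8 / (((4+j:ℕ):ℝ) * Real.log ((4+j:ℕ):ℝ) ^ (1+Δ)) := hterm
        _ = (8/Δ) * (Δ / (((4+j:ℕ):ℝ) * Real.log ((4+j:ℕ):ℝ) ^ (1+Δ))) := by
            field_simp
        _ ≤ (8/Δ) * (u j - u (j+1)) := by
            apply mul_le_mul_of_nonneg_left hmvt' (by positivity)
    have h5 : ∑ j ∈ Finset.range n, (v (2^(4+j)))⁻¹ ≤ 8/Δ := by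
      calc ∑ j ∈ Finset.range n, (v (2^(4+j)))⁻¹
          ≤ ∑ j ∈ Finset.range n, (8/Δ) * (u j - u (j+1)) := Finset.sum_le_sum fun j _ => h4 j
        _ = (8/Δ) * (u 0 - u n) := by rw [← Finset.mul_sum, Finset.sum_range_sub' u n]
        _ ≤ 8/Δ := by
            have : u 0 - u n ≤ 1 := by linarith [hun n, hu0]
            calc (8/Δ) * (u 0 - u n) ≤ (8/Δ) * 1 :=
                  mul_le_mul_of_nonneg_left this (by positivity)
              _ = 8/Δ := mul_one _
    have h6 : (4:ℝ) ≤ 4/Δ := by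
      rw [le_div_iff₀ hΔ0]; nlinarith
    calc ∑ k ∈ Finset.range n, (v (2^k))⁻¹ ≤ 4 + 8/Δ := by linarith
      _ ≤ 12/Δ := by rw [show (12:ℝ)/Δ = 4/Δ + 8/Δ by ring]; linarith
  rw [ENNReal.tsum_eq_iSup_sum]
  refine iSup_le fun s => ?_
  obtain ⟨n, hn⟩ := Finset.exists_nat_subset_range s
  calc ∑ k ∈ s, ENNReal.ofReal (v (2^k))⁻¹
      ≤ ∑ k ∈ Finset.range n, ENNReal.ofReal (v (2^k))⁻¹ :=
        Finset.sum_le_sum_of_subset hn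
    _ = ENNReal.ofReal (∑ k ∈ Finset.range n, (v (2^k))⁻¹) :=
        (ENNReal.ofReal_sum_of_nonneg fun k _ => inv_nonneg.2 (hvpos k).le).symm
    _ ≤ ENNReal.ofReal (12/Δ) := ENNReal.ofReal_le_ofReal (hsum n)


end Aux

/-- Corollary (inequality (6.6)). -/
theorem martingale_maximal_BGL_loglog :
    ∃ C : ℝ, 0 < C ∧
      ∀ (X : Type*) [m0 : MeasurableSpace X], ∀ (μ : Measure X) [SigmaFinite μ],
      ∀ (a : ℝ) (b : ℝ≥0∞), 1 < a → ENNReal.ofReal a < b →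
      ∀ (ψ : ℝ → ℝ), IsPsi a b ψ →
      ∀ (ℱ : Filtration ℕ m0), (∀ n, SigmaFinite (μ.trim (ℱ.le n))) →
      ∀ (S : ℕ → X → ℝ), Martingale S ℱ μ → (∀ n, Integrable (S n) μ) →
      (∀ n, ∀ p ∈ expSet a b, lpNorm μ (S n) p < ⊤) →
      ∀ (γ : ℝ), 0 < γ →
      ∀ (L : ℕ → ℝ), (∀ n, 1 ≤ n → 0 < L n) →
      ∀ (C₂ : ℝ), (∀ n, 1 ≤ n → L (2 * n) / L n ≤ C₂) →
      (∀ m n : ℕ, 1 ≤ m → m ≤ n → (m : ℝ) ^ γ * L m ≤ (n : ℝ) ^ γ * L n) →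
      ∀ (K : ℝ), 0 ≤ K →
      (∀ n, 1 ≤ n → ∀ p ∈ expSet a b,
        lpNorm μ (S n) p ≤ ENNReal.ofReal (K * ψ p * ((n : ℝ) ^ γ * L n))) →
      ∀ (Δ : ℝ), 0 < Δ → Δ ≤ 1 →
      ∀ (v : ℕ → ℝ), (∀ n, 1 ≤ n → 1 ≤ v n) →
      (∀ m n : ℕ, 1 ≤ m → m ≤ n → v m ≤ v n) →
      (∀ n : ℕ, 16 ≤ n →
        Real.log n * Real.log (Real.log n) ^ (1 + Δ) ≤ v n) →
      (⨆ p ∈ expSet a b,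
          lpNormNN μ
            (fun x => ⨆ n : ℕ, ⨆ _ : 1 ≤ n,
              ENNReal.ofReal (|S n x| / (v n * ((n : ℝ) ^ γ * L n)))) p /
            ENNReal.ofReal (p * ψ p / (p - 1))) ≤
        ENNReal.ofReal (C * (2 : ℝ) ^ γ * C₂ * K / Δ) := by
  refine ⟨12, by norm_num, ?_⟩
  intro X m0 μ _ a b ha hab ψ hψ ℱ hσf S hMart hInt hLp γ hγ L hL C₂ hC₂ hσmono
    K hK0 hKb Δ hΔ0 hΔ1 v hv1 hvmono hvlog
  haveI : SigmaFiniteFiltration μ ℱ := ⟨hσf⟩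
  refine iSup₂_le fun p hp => ?_
  obtain ⟨hap, hpb⟩ := hp
  have hp1 : 1 < p := lt_trans ha hap
  have hp0 : (0:ℝ) < p := lt_trans zero_lt_one hp1
  have hpm1 : (0:ℝ) < p - 1 := by linarith
  have hψp : 1 ≤ ψ p := hψ.one_le p ⟨hap, hpb⟩
  -- the nonnegative submartingale |S|
  set absf : ℕ → X → ℝ := fun n x => |S n x| with habsf
  have habs : Submartingale absf ℱ μ := by
    have h := hMart.submartingale.sup hMart.neg.submartingale
    have he : (S ⊔ -S) = absf := by
      funext n x
      simp only [Pi.sup_apply, Pi.neg_apply, habsf]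
      rfl
    rwa [he] at h
  have hnn : ∀ n x, 0 ≤ absf n x := fun n x => abs_nonneg _
  have hmf : ∀ n, Measurable (absf n) := fun n =>
    ((habs.stronglyMeasurable n).measurable).le (ℱ.le n)
  -- finiteness in L^p
  have hfin : ∀ n, ∫⁻ x, ENNReal.ofReal (absf n x) ^ p ∂μ ≠ ⊤ := by
    intro n
    have h := hLp n p ⟨hap, hpb⟩
    rw [_root_.lpNorm] at h
    intro htop
    have : (∫⁻ x, ENNReal.ofReal (|S n x| ^ p) ∂μ) = ⊤ := by
      rw [← htop]
      refine lintegral_congr fun x => ?_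
      rw [ENNReal.ofReal_rpow_of_nonneg (abs_nonneg _) hp0.le]
    rw [this, ENNReal.top_rpow_of_pos (by positivity)] at h
    exact (lt_irrefl _) h
  -- weight sequence
  set σn : ℕ → ℝ := fun n => (n:ℝ) ^ γ * L n with hσn
  set w : ℕ → ℝ := fun n => v n * σn n with hw
  have hσpos : ∀ n : ℕ, 1 ≤ n → 0 < σn n := by
    intro n hn
    have : (0:ℝ) < (n:ℝ) := by exact_mod_cast hn
    exact mul_pos (Real.rpow_pos_of_pos this γ) (hL n hn)
  have hwpos : ∀ n : ℕ, 1 ≤ n → 0 < w n := fun n hn =>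
    mul_pos (lt_of_lt_of_le zero_lt_one (hv1 n hn)) (hσpos n hn)
  have hwmono : ∀ m n : ℕ, 1 ≤ m → m ≤ n → w m ≤ w n := by
    intro m n hm hmn
    exact mul_le_mul (hvmono m n hm hmn) (hσmono m n hm hmn) (hσpos m hm).le
      (le_trans zero_le_one (hv1 n (le_trans hm hmn)))
  -- positivity of C₂
  have hC₂pos : 0 < C₂ := by
    have h := hC₂ 1 le_rfl
    have h2 : 0 < L (2*1) / L 1 := div_pos (hL 2 (by norm_num)) (hL 1 le_rfl)
    linarith
  have h2γ : (0:ℝ) < (2:ℝ) ^ γ := Real.rpow_pos_of_pos (by norm_num) γ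
  -- growth of σn along dyadic scales
  have hσgrow : ∀ k : ℕ, σn (2^(k+1)) ≤ 2^γ * C₂ * σn (2^k) := by
    intro k
    have h2k1 : (1:ℕ) ≤ 2^k := Nat.one_le_two_pow
    have hLd : L (2 * 2^k) ≤ C₂ * L (2^k) := by
      have h := hC₂ (2^k) h2k1
      rwa [div_le_iff₀ (hL _ h2k1)] at h
    have hcast : ((2^(k+1) : ℕ) : ℝ) = 2 * ((2^k : ℕ) : ℝ) := by push_cast; ring
    have hpow : ((2^(k+1) : ℕ) : ℝ) ^ γ = 2^γ * ((2^k : ℕ) : ℝ)^γ := by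
      rw [hcast, Real.mul_rpow (by norm_num) (by positivity)]
    have hre : (2^(k+1) : ℕ) = 2 * 2^k := by ring
    calc σn (2^(k+1)) = ((2^(k+1) : ℕ):ℝ)^γ * L (2 * 2^k) := by rw [hσn, hre]
      _ = 2^γ * (((2^k : ℕ):ℝ)^γ * L (2 * 2^k)) := by rw [hpow]; ring
      _ ≤ 2^γ * (((2^k : ℕ):ℝ)^γ * (C₂ * L (2^k))) := by
          refine mul_le_mul_of_nonneg_left ?_ h2γ.le
          exact mul_le_mul_of_nonneg_left hLd (by positivity)
      _ = 2^γ * C₂ * σn (2^k) := by rw [hσn]; ring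
  -- dyadic block majorants
  set T : ℕ → X → ℝ≥0∞ := fun k x =>
    ENNReal.ofReal (w (2^k))⁻¹ * ENNReal.ofReal (maxTo absf (2^(k+1)) x) with hT
  have hTm : ∀ k, Measurable (T k) := fun k =>
    (measurable_const.mul ((measurable_maxTo hmf _).ennreal_ofReal))
  -- pointwise domination of the maximal function
  have hpoint : ∀ x : X, (⨆ n : ℕ, ⨆ _ : 1 ≤ n,
      ENNReal.ofReal (|S n x| / (v n * ((n : ℝ) ^ γ * L n)))) ≤ ∑' k, T k x := by
    intro x
    refine iSup₂_le fun n hn => ?_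
    set k := Nat.log 2 n with hk
    have h2k : 2^k ≤ n := Nat.pow_log_le_self 2 (by omega)
    have hk2 : n < 2^(k+1) := Nat.lt_pow_succ_log_self (by norm_num) n
    have h1k : (1:ℕ) ≤ 2^k := Nat.one_le_two_pow
    have hvw : v n * ((n : ℝ) ^ γ * L n) = w n := by rw [hw, hσn]
    have hdiv : ENNReal.ofReal (|S n x| / w n) ≤ T k x := by
      rw [hT, div_eq_inv_mul, ENNReal.ofReal_mul (inv_nonneg.2 (hwpos n hn).le)]
      refine mul_le_mul' (ENNReal.ofReal_le_ofReal ?_) (ENNReal.ofReal_le_ofReal ?_)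
      · exact inv_anti₀ (hwpos _ h1k) (hwmono _ _ h1k h2k)
      · exact le_maxTo absf (le_of_lt hk2) x
    calc ENNReal.ofReal (|S n x| / (v n * ((n : ℝ) ^ γ * L n)))
        = ENNReal.ofReal (|S n x| / w n) := by rw [hvw]
      _ ≤ T k x := hdiv
      _ ≤ ∑' k, T k x := ENNReal.le_tsum k
  -- per-block L^p bound
  set B : ℝ := (p/(p-1)) * (K * ψ p) * (2^γ * C₂) with hB
  have hBnn : 0 ≤ B := by positivity
  have hblock : ∀ k : ℕ, (∫⁻ x, T k x ^ p ∂μ) ^ (1/p) ≤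
      ENNReal.ofReal (B * (v (2^k))⁻¹) := by
    intro k
    have h1k : (1:ℕ) ≤ 2^k := Nat.one_le_two_pow
    have h1k1 : (1:ℕ) ≤ 2^(k+1) := Nat.one_le_two_pow
    set c : ℝ≥0∞ := ENNReal.ofReal (w (2^k))⁻¹ with hc
    have hsplit : (∫⁻ x, T k x ^ p ∂μ) ^ (1/p) =
        c * (∫⁻ x, ENNReal.ofReal (maxTo absf (2^(k+1)) x) ^ p ∂μ) ^ (1/p) := by
      have h1 : ∀ x : X, T k x ^ p =
          c^p * ENNReal.ofReal (maxTo absf (2^(k+1)) x) ^ p := fun x =>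
        ENNReal.mul_rpow_of_nonneg _ _ hp0.le
      simp_rw [h1]
      rw [lintegral_const_mul _ ((measurable_maxTo hmf _).ennreal_ofReal.pow_const _),
        ENNReal.mul_rpow_of_nonneg _ _ (by positivity), ← ENNReal.rpow_mul,
        mul_one_div_cancel hp0.ne.symm, ENNReal.rpow_one]
    have hdoob := doob_lp habs hnn hp1 hfin (2^(k+1))
    have hSnorm : (∫⁻ x, ENNReal.ofReal (absf (2^(k+1)) x) ^ p ∂μ) ^ (1/p) ≤
        ENNReal.ofReal (K * ψ p * σn (2^(k+1))) := by
      have h := hKb (2^(k+1)) h1k1 p ⟨hap, hpb⟩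
      rw [_root_.lpNorm] at h
      refine le_trans (le_of_eq ?_) h
      congr 1
      refine lintegral_congr fun x => ?_
      rw [ENNReal.ofReal_rpow_of_nonneg (abs_nonneg _) hp0.le]
    have hKσ : K * ψ p * σn (2^(k+1)) ≤ K * ψ p * (2^γ * C₂ * σn (2^k)) := by
      refine mul_le_mul_of_nonneg_left (hσgrow k) ?_
      positivity
    calc (∫⁻ x, T k x ^ p ∂μ) ^ (1/p)
        = c * (∫⁻ x, ENNReal.ofReal (maxTo absf (2^(k+1)) x) ^ p ∂μ) ^ (1/p) := hsplit
      _ ≤ c * (ENNReal.ofReal (p/(p-1)) *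
            (∫⁻ x, ENNReal.ofReal (absf (2^(k+1)) x) ^ p ∂μ) ^ (1/p)) :=
          mul_le_mul_right hdoob _
      _ ≤ c * (ENNReal.ofReal (p/(p-1)) * ENNReal.ofReal (K * ψ p * (2^γ * C₂ * σn (2^k)))) := by
          refine mul_le_mul_right (mul_le_mul_right ?_ _) _
          exact le_trans hSnorm (ENNReal.ofReal_le_ofReal hKσ)
      _ = ENNReal.ofReal ((w (2^k))⁻¹ * ((p/(p-1)) * (K * ψ p * (2^γ * C₂ * σn (2^k))))) := by
          rw [hc, ← ENNReal.ofReal_mul (by positivity), ← ENNReal.ofReal_mul (inv_nonneg.2 (hwpos _ h1k).le)]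
      _ = ENNReal.ofReal (B * (v (2^k))⁻¹) := by
          congr 1
          rw [hB, hw]
          have hv0 : v (2^k) ≠ 0 := by
            have := hv1 (2^k) h1k; linarith
          have hσ0 : σn (2^k) ≠ 0 := (hσpos _ h1k).ne.symm
          field_simp
  -- assemble
  have hseries := series_bound hΔ0 hΔ1 hv1 hvlog
  have hmain : lpNormNN μ (fun x => ⨆ n : ℕ, ⨆ _ : 1 ≤ n,
      ENNReal.ofReal (|S n x| / (v n * ((n : ℝ) ^ γ * L n)))) p ≤
      ENNReal.ofReal (B * (12/Δ)) := by
    rw [lpNormNN]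
    calc (∫⁻ x, (⨆ n : ℕ, ⨆ _ : 1 ≤ n,
          ENNReal.ofReal (|S n x| / (v n * ((n : ℝ) ^ γ * L n)))) ^ p ∂μ) ^ (1/p)
        ≤ (∫⁻ x, (∑' k, T k x) ^ p ∂μ) ^ (1/p) := by
          refine ENNReal.rpow_le_rpow (lintegral_mono fun x => ?_) (by positivity)
          exact ENNReal.rpow_le_rpow (hpoint x) hp0.le
      _ ≤ ∑' k, (∫⁻ x, T k x ^ p ∂μ) ^ (1/p) := lp_tsum_le hTm hp1.le
      _ ≤ ∑' k, ENNReal.ofReal (B * (v (2^k))⁻¹) := ENNReal.tsum_le_tsum hblock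
      _ = ENNReal.ofReal B * ∑' k, ENNReal.ofReal ((v (2^k))⁻¹) := by
          simp_rw [ENNReal.ofReal_mul hBnn]
          rw [ENNReal.tsum_mul_left]
      _ ≤ ENNReal.ofReal B * ENNReal.ofReal (12/Δ) := mul_le_mul_right hseries _
      _ = ENNReal.ofReal (B * (12/Δ)) := by rw [← ENNReal.ofReal_mul hBnn]
  refine ENNReal.div_le_of_le_mul ?_
  refine le_trans hmain ?_
  rw [← ENNReal.ofReal_mul (by positivity)]
  refine ENNReal.ofReal_le_ofReal (le_of_eq ?_)
  rw [hB]
  field_simp
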